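/- If a family {s_1, …, s_r} of sign vectors in {−1,1}^n is Schur independent, then the vectors s_1, …, s_r are linearly independent in ℝ^n. -/
import Mathlib


open Matrix

noncomputable section

/-- A sign vector: every entry is `1` or `-1`. -/
def IsSignVec {n : ℕ} (s : Fin n → ℝ) : Prop := ∀ k, s k = 1 ∨ s k = -1

/-- Schur independence of a family of vectors: the all-ones vector together with the
entrywise (Schur) products `s i ⊙ s j` for `i < j` form a linearly independent family. -/
def SchurIndependent {n r : ℕ} (s : Fin r → Fin n → ℝ) : Prop :=
  LinearIndependent ℝ (fun p : Option {q : Fin r × Fin r // q.1 < q.2} =>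
    p.elim (fun _ : Fin n => (1 : ℝ)) (fun q k => s q.1.1 k * s q.1.2 k))

/-- a Schur independent family of sign vectors is linearly independent. -/
theorem schurIndependent_linearIndependent {n r : ℕ}
    (s : Fin r → Fin n → ℝ) (hs : ∀ i, IsSignVec (s i))
    (h : SchurIndependent s) :
    LinearIndependent ℝ s := by
  classical
  rw [SchurIndependent, Fintype.linearIndependent_iff] at h
  rw [Fintype.linearIndependent_iff]
  intro c hc j
  set F : Option {q : Fin r × Fin r // q.1 < q.2} → Fin n → ℝ :=
    fun p => p.elim (fun _ : Fin n => (1 : ℝ)) (fun q k => s q.1.1 k * s q.1.2 k) with hF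
  set g : Option {q : Fin r × Fin r // q.1 < q.2} → ℝ :=
    fun p => p.elim (c j) (fun q =>
      if q.1.1 = j then c q.1.2 else if q.1.2 = j then c q.1.1 else 0) with hg
  set φ : Fin r → Option {q : Fin r × Fin r // q.1 < q.2} :=
    fun i => if hij : i < j then some ⟨(i, j), hij⟩ else
      if hji : j < i then some ⟨(j, i), hji⟩ else none with hφ
  have hφj : φ j = none := by simp [hφ]
  have hφlt : ∀ i (hij : i < j), φ i = some ⟨(i, j), hij⟩ := by
    intro i hij; simp [hφ, hij]
  have hφgt : ∀ i (hji : j < i), φ i = some ⟨(j, i), hji⟩ := by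
    intro i hji; simp [hφ, hji, hji.asymm]
  have hψ : ∀ i, (φ i).elim j (fun q => if q.1.1 = j then q.1.2 else q.1.1) = i := by
    intro i
    rcases lt_trichotomy i j with hij | rfl | hji
    · rw [hφlt i hij]; simp [ne_of_lt hij]
    · rw [hφj]; rfl
    · rw [hφgt i hji]; simp
  have hφinj : Function.Injective φ := fun a b hab => by
    rw [← hψ a, ← hψ b, hab]
  have hgzero : ∀ p ∉ Finset.image φ Finset.univ, g p = 0 := by
    intro p hp
    rcases p with _ | ⟨⟨⟨a, b⟩, hab⟩⟩
    · exact absurd (Finset.mem_image.2 ⟨j, Finset.mem_univ j, hφj⟩) hp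
    · have haj : a ≠ j := by
        rintro rfl
        exact hp (Finset.mem_image.2 ⟨b, Finset.mem_univ b, hφgt b hab⟩)
      have hbj : b ≠ j := by
        rintro rfl
        exact hp (Finset.mem_image.2 ⟨a, Finset.mem_univ a, hφlt a hab⟩)
      simp [hg, haj, hbj]
  have key : ∑ p, g p • F p = 0 := by
    funext k
    have hck : ∑ i, c i * s i k = 0 := by
      have := congrFun hc k
      simpa [Finset.sum_apply] using this
    have hsq : ∀ i, s i k * s i k = 1 := by
      intro i; rcases hs i k with h1 | h1 <;> rw [h1] <;> ring
    calc (∑ p, g p • F p) k = ∑ p, g p * F p k := by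
          simp [Finset.sum_apply]
      _ = ∑ p ∈ Finset.image φ Finset.univ, g p * F p k := by
          refine (Finset.sum_subset (Finset.subset_univ _) ?_).symm
          intro p _ hp
          rw [hgzero p hp, zero_mul]
      _ = ∑ i, g (φ i) * F (φ i) k := Finset.sum_image (fun a _ b _ hab => hφinj hab)
      _ = ∑ i, c i * (s i k * s j k) := by
          apply Finset.sum_congr rfl
          intro i _
          rcases lt_trichotomy i j with hij | rfl | hji
          · rw [hφlt i hij]; simp [hg, hF, ne_of_lt hij]
          · rw [hφj]; simp [hg, hF, hsq]
          · rw [hφgt i hji]; simp [hg, hF, mul_comm]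
      _ = (∑ i, c i * s i k) * s j k := by
          rw [Finset.sum_mul]
          exact Finset.sum_congr rfl fun i _ => (mul_assoc _ _ _).symm
      _ = 0 := by rw [hck, zero_mul]
  have := h g key none
  simpa [hg] using this
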